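/- Let $0 < p < 1$ and let $m \ge 1$ be an integer. Let $Z_1, Z_2$ be independent random variables, each negative binomial with $m$ successes and failure probability $p$ (i.e. $\Pr(Z = k) = \binom{k-1}{m-1} p^{k-m}(1-p)^m$ for $k \ge m$). Then $\sum_{k=m}^{\infty} p^{-k} \, \Pr(\min(Z_1, Z_2) = k) < 2 (4/p)^m$. -/

import Mathlib

open Finset

lemma hockey (r n : ℕ) : ∑ k ∈ Finset.range (n+1), (k + r).choose r = (n + (r+1)).choose (r+1) := by
  induction n with
  | zero => simp
  | succ n ih =>
    rw [Finset.sum_range_succ, ih, show (n+1)+(r+1) = (n+r+1)+1 by omega,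
      Nat.choose_succ_succ, show n+(r+1) = n+r+1 by omega, show (n+1)+r = n+r+1 by omega,
      Nat.add_comm]

lemma vdm (r n : ℕ) : (n + (r+1)).choose (r+1) * (n + r).choose r ≤ (2*n + (2*r+1)).choose (2*r+1) := by
  have hv := Nat.add_choose_eq (n+(r+1)) (n+r) (2*r+1)
  have hmem : ((r+1, r) : ℕ × ℕ) ∈ Finset.HasAntidiagonal.antidiagonal (2*r+1) := by
    rw [Finset.HasAntidiagonal.mem_antidiagonal]; simp; omega
  calc (n + (r+1)).choose (r+1) * (n + r).choose r
      ≤ ∑ ij ∈ Finset.HasAntidiagonal.antidiagonal (2*r+1), (n+(r+1)).choose ij.1 * (n+r).choose ij.2 :=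
        Finset.single_le_sum (f := fun ij : ℕ × ℕ => (n+(r+1)).choose ij.1 * (n+r).choose ij.2)
          (fun i _ => Nat.zero_le _) hmem
    _ = (2*n + (2*r+1)).choose (2*r+1) := by rw [← hv]; congr 1; omega

noncomputable def auxA (p : ℝ) (r : ℕ) (j : ℕ) : ℝ :=
  ((j + r).choose r : ℝ) * p ^ j * (1 - p) ^ (r + 1)

noncomputable def auxT (p : ℝ) (r : ℕ) (k : ℕ) : ℝ := ∑' j : ℕ, auxA p r (k + j)

noncomputable def auxC (p : ℝ) (r : ℕ) (k : ℕ) : ℝ :=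
  (1/p)^(r+1) * (1-p)^(r+1) * ((k + r).choose r : ℝ)

variable {p : ℝ} {r : ℕ}

lemma auxA_nonneg (hp : 0 < p) (hp1 : p < 1) (j : ℕ) : 0 ≤ auxA p r j := by
  have h1 : (0:ℝ) ≤ 1 - p := by linarith
  rw [auxA]; positivity

lemma auxC_nonneg (hp : 0 < p) (hp1 : p < 1) (k : ℕ) : 0 ≤ auxC p r k := by
  have h1 : (0:ℝ) ≤ 1 - p := by linarith
  rw [auxC]; positivity

lemma summable_auxA (hp : 0 < p) (hp1 : p < 1) : Summable (auxA p r) := by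
  have hn : ‖p‖ < 1 := by rw [Real.norm_eq_abs, abs_of_pos hp]; exact hp1
  exact (summable_choose_mul_geometric_of_norm_lt_one r hn).mul_right ((1-p)^(r+1))

lemma summable_auxA_add (hp : 0 < p) (hp1 : p < 1) (k : ℕ) :
    Summable (fun j => auxA p r (k + j)) :=
  (summable_auxA hp hp1).comp_injective (add_right_injective k)

lemma auxT_nonneg (hp : 0 < p) (hp1 : p < 1) (k : ℕ) : 0 ≤ auxT p r k :=
  tsum_nonneg fun j => auxA_nonneg hp hp1 _

lemma auxT_succ (hp : 0 < p) (hp1 : p < 1) (k : ℕ) :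
    auxT p r k = auxA p r k + auxT p r (k+1) := by
  rw [auxT, Summable.tsum_eq_zero_add (summable_auxA_add hp hp1 k)]
  have h1 : auxA p r (k + 0) = auxA p r k := by norm_num
  have h2 : ∑' j : ℕ, auxA p r (k + (j + 1)) = auxT p r (k + 1) := by
    rw [auxT]; exact tsum_congr fun j => by congr 1; omega
  rw [h1, h2]

lemma auxKey (hp : 0 < p) (hp1 : p < 1) :
    Summable (fun k => auxC p r k * auxT p r k) ∧
    ∑' k, auxC p r k * auxT p r k ≤ (1/p)^(r+1) * ((1 + Real.sqrt p)^2)^(r+1) := by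
  set q := Real.sqrt p with hqdef
  have hq0 : 0 < q := Real.sqrt_pos.2 hp
  have hq2 : q^2 = p := Real.sq_sqrt hp.le
  have hq1 : q < 1 := by nlinarith
  have h1p : (0:ℝ) ≤ 1 - p := by linarith
  have hc0 := auxC_nonneg (p := p) (r := r) hp hp1
  have ha0 := auxA_nonneg (p := p) (r := r) hp hp1
  -- the dominating series
  set D : ℕ → ℝ := fun N => (((N + (2*r+1)).choose (2*r+1) : ℕ) : ℝ) * q^N with hDdef
  have hqn : ‖q‖ < 1 := by rw [Real.norm_eq_abs, abs_of_pos hq0]; exact hq1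
  have hDsum : Summable D := summable_choose_mul_geometric_of_norm_lt_one (2*r+1) hqn
  have hDtsum : ∑' N, D N = 1/(1-q)^(2*r+1+1) :=
    tsum_choose_mul_geometric_of_norm_lt_one (2*r+1) hqn
  have hD0 : ∀ N, 0 ≤ D N := fun N => by
    have := hq0.le
    rw [hDdef]; positivity
  -- the diagonal series
  set w : ℕ → ℝ := fun n => ((n + (r+1)).choose (r+1) : ℝ) * ((n + r).choose r : ℝ) * p^n with hwdef
  have hw0 : ∀ n, 0 ≤ w n := fun n => by rw [hwdef]; positivity
  have hpq : ∀ n, p ^ n = q ^ (2*n) := fun n => by rw [pow_mul, hq2]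
  have hwle : ∀ n, w n ≤ D (2*n) := by
    intro n
    have h := vdm r n
    have hcast : (((n + (r+1)).choose (r+1) * (n + r).choose r : ℕ) : ℝ) ≤
        (((2*n + (2*r+1)).choose (2*r+1) : ℕ) : ℝ) := Nat.cast_le.2 h
    have hp2 : (0:ℝ) ≤ p ^ n := by positivity
    calc w n = (((n + (r+1)).choose (r+1) * (n + r).choose r : ℕ) : ℝ) * p ^ n := by
          rw [hwdef]; push_cast; ring
      _ ≤ (((2*n + (2*r+1)).choose (2*r+1) : ℕ) : ℝ) * p ^ n :=
          mul_le_mul_of_nonneg_right hcast hp2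
      _ = D (2*n) := by rw [hDdef, hpq n]
  have h2inj : Function.Injective (fun n : ℕ => 2*n) := fun a b h => by dsimp at h; omega
  have hwsum : Summable w :=
    Summable.of_nonneg_of_le hw0 hwle (hDsum.comp_injective h2inj)
  have hwtsum : ∑' n, w n ≤ ∑' N, D N :=
    hwsum.tsum_le_tsum_of_inj (fun n => 2*n) h2inj (fun c _ => hD0 c) hwle hDsum
  -- the matrix
  set H : ℕ × ℕ → ℝ := fun x => if x.2 ≤ x.1 then auxC p r x.2 * auxA p r x.1 else 0 with hHdef
  have hH0 : ∀ x, 0 ≤ H x := by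
    intro x
    rw [hHdef]
    dsimp only
    split
    · exact mul_nonneg (hc0 _) (ha0 _)
    · exact le_rfl
  have hHoff : ∀ n, ∀ k ∉ Finset.range (n+1), H (n, k) = 0 := by
    intro n k hk
    rw [Finset.mem_range] at hk
    rw [hHdef]
    exact if_neg (by omega)
  have hHrow : ∀ n, ∑' k, H (n, k) =
      ((1/p)^(r+1) * (1-p)^(r+1) * ((n + (r+1)).choose (r+1) : ℝ)) * auxA p r n := by
    intro n
    rw [tsum_eq_sum (hHoff n)]
    have h1 : ∑ k ∈ Finset.range (n+1), H (n, k)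
        = ∑ k ∈ Finset.range (n+1), auxC p r k * auxA p r n := by
      apply Finset.sum_congr rfl
      intro k hk
      rw [Finset.mem_range] at hk
      rw [hHdef]
      exact if_pos (by omega)
    rw [h1, ← Finset.sum_mul]
    congr 1
    have h2 : ∑ k ∈ Finset.range (n+1), auxC p r k
        = (1/p)^(r+1) * (1-p)^(r+1) * ∑ k ∈ Finset.range (n+1), ((k + r).choose r : ℝ) := by
      rw [Finset.mul_sum]; apply Finset.sum_congr rfl; intro k _; rw [auxC]
    rw [h2, ← Nat.cast_sum, hockey]
  have hHrowsum : ∀ n, Summable (fun k => H (n, k)) := fun n =>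
    summable_of_ne_finset_zero (hHoff n)
  have hrowfun : (fun n => ∑' k, H (n, k))
      = fun n => ((1/p)^(r+1) * (1-p)^(r+1) * (1-p)^(r+1)) * w n := by
    funext n
    rw [hHrow n, auxA, hwdef]
    ring
  have hHsum : Summable H := by
    rw [summable_prod_of_nonneg (fun x => hH0 x)]
    refine ⟨hHrowsum, ?_⟩
    rw [hrowfun]
    exact hwsum.mul_left _
  -- reindexing
  set φ : ℕ × ℕ → ℕ × ℕ := fun x => (x.1 + x.2, x.1) with hφdef
  have hφinj : Function.Injective φ := by
    intro a b h
    rw [hφdef] at h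
    simp only [Prod.mk.injEq, Prod.ext_iff] at h ⊢
    omega
  have hφsupp : Function.support H ⊆ Set.range φ := by
    intro x hx
    have hle : x.2 ≤ x.1 := by
      by_contra hcon
      exact hx (by rw [hHdef]; exact if_neg hcon)
    refine ⟨(x.2, x.1 - x.2), ?_⟩
    rw [hφdef]
    dsimp
    rw [Prod.ext_iff]
    dsimp
    omega
  have hkey : ∑' y, H (φ y) = ∑' x, H x := Function.Injective.tsum_eq hφinj hφsupp
  have hFeq : ∀ y : ℕ × ℕ, H (φ y) = auxC p r y.1 * auxA p r (y.1 + y.2) := by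
    intro y
    rw [hφdef, hHdef]
    exact if_pos (Nat.le_add_right _ _)
  have hFsum : Summable (fun y : ℕ × ℕ => auxC p r y.1 * auxA p r (y.1 + y.2)) :=
    (hHsum.comp_injective hφinj).congr hFeq
  have hcT : ∀ k, auxC p r k * auxT p r k = ∑' j, auxC p r k * auxA p r (k + j) := by
    intro k
    rw [auxT, tsum_mul_left]
  have hFrowsum : ∀ k, Summable (fun j => auxC p r k * auxA p r (k + j)) := fun k =>
    (summable_auxA_add hp hp1 k).mul_left _
  have hF0 : ∀ y : ℕ × ℕ, 0 ≤ auxC p r y.1 * auxA p r (y.1 + y.2) := fun y =>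
    mul_nonneg (hc0 _) (ha0 _)
  constructor
  · have h2 := ((summable_prod_of_nonneg (fun y => hF0 y)).1 hFsum).2
    exact h2.congr (fun k => ((hcT k).trans rfl).symm)
  · have h1q : (0:ℝ) < 1 - q := by linarith
    have hfac : 1 - p = (1-q)*(1+q) := by nlinarith
    calc ∑' k, auxC p r k * auxT p r k
        = ∑' k, ∑' j, auxC p r k * auxA p r (k + j) := tsum_congr hcT
      _ = ∑' y : ℕ × ℕ, auxC p r y.1 * auxA p r (y.1 + y.2) := (Summable.tsum_prod' hFsum hFrowsum).symm
      _ = ∑' y, H (φ y) := (tsum_congr fun y => (hFeq y).symm)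
      _ = ∑' x, H x := hkey
      _ = ∑' n, ∑' k, H (n, k) := Summable.tsum_prod' hHsum hHrowsum
      _ = ∑' n, ((1/p)^(r+1) * (1-p)^(r+1) * (1-p)^(r+1)) * w n := by rw [hrowfun]
      _ = ((1/p)^(r+1) * (1-p)^(r+1) * (1-p)^(r+1)) * ∑' n, w n := tsum_mul_left
      _ ≤ ((1/p)^(r+1) * (1-p)^(r+1) * (1-p)^(r+1)) * ∑' N, D N := by
          apply mul_le_mul_of_nonneg_left hwtsum
          positivity
      _ = (1/p)^(r+1) * ((1+q)^2)^(r+1) := by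
          rw [hDtsum, hfac, show 2*r+1+1 = (r+1)+(r+1) by omega, pow_add,
            ← pow_mul, show 2*(r+1) = (r+1)+(r+1) by omega, pow_add]
          simp only [mul_pow]
          have hne : (1-q)^(r+1) ≠ 0 := pow_ne_zero _ (by linarith)
          field_simp
          ring

/-- The negative binomial pmf: number of trials until the `m`-th success,
failure probability `p`. -/
noncomputable def nbPMF (m : ℕ) (p : ℝ) (k : ℕ) : ℝ :=
  ((k - 1).choose (m - 1) : ℝ) * p ^ (k - m) * (1 - p) ^ m

/-- Tail of the negative binomial distribution: `Pr(X > x)`. -/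
noncomputable def nbTail (m : ℕ) (p : ℝ) (x : ℕ) : ℝ := ∑' j : ℕ, nbPMF m p (x + 1 + j)

/-- For `Z₁, Z₂` i.i.d. `NB(m,p)`, `Pr(min(Z₁,Z₂) = k) = tail(k-1)² - tail(k)²`, and
`∑_{k=m}^∞ p^{-k} Pr(min(Z₁,Z₂) = k) < 2 (4/p)^m`. -/
theorem claim_min_pgf_bound (p : ℝ) (hp : 0 < p) (hp1 : p < 1) (m : ℕ) (hm : 1 ≤ m) :
    ∑' k : ℕ, (1 / p) ^ (m + k) *
        ((nbTail m p (m + k - 1)) ^ 2 - (nbTail m p (m + k)) ^ 2) <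
      2 * (4 / p) ^ m := by
  obtain ⟨r, rfl⟩ : ∃ r, m = r + 1 := ⟨m - 1, by omega⟩
  have hpmf : ∀ j, nbPMF (r+1) p (r+1+j) = auxA p r j := by
    intro j
    simp only [nbPMF, auxA]
    rw [show r+1+j-1 = j + r by omega, show r+1+j-(r+1) = j by omega, show r+1-1 = r by omega]
  have htail : ∀ k, nbTail (r+1) p (r+1+k) = auxT p r (k+1) := by
    intro k
    rw [nbTail, auxT]
    apply tsum_congr
    intro j
    rw [show r+1+k+1+j = r+1+(k+1+j) by omega, hpmf]
  have htail' : ∀ k, nbTail (r+1) p (r+1+k-1) = auxT p r k := by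
    intro k
    rw [nbTail, auxT]
    apply tsum_congr
    intro j
    rw [show r+1+k-1+1+j = r+1+(k+j) by omega, hpmf]
  have hgoal : ∀ k, (1/p)^(r+1+k) *
      ((nbTail (r+1) p (r+1+k-1))^2 - (nbTail (r+1) p (r+1+k))^2)
      = (1/p)^(r+1+k) * ((auxT p r k)^2 - (auxT p r (k+1))^2) := fun k => by
    rw [htail, htail']
  rw [tsum_congr hgoal]
  obtain ⟨hSsum, hSle⟩ := auxKey (p := p) (r := r) hp hp1
  have hc0 := auxC_nonneg (p := p) (r := r) hp hp1
  have ha0 := auxA_nonneg (p := p) (r := r) hp hp1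
  have hT0 := auxT_nonneg (p := p) (r := r) hp hp1
  have hstep := auxT_succ (p := p) (r := r) hp hp1
  have hTmono : ∀ k, auxT p r (k+1) ≤ auxT p r k := fun k => by
    have := hstep k; have := ha0 k; linarith
  have hCA : ∀ k, (1/p)^(r+1+k) * auxA p r k = auxC p r k := by
    intro k
    rw [auxA, auxC, pow_add]
    have hppow : (1/p)^k * p^k = 1 := by
      rw [one_div, inv_pow, inv_mul_cancel₀ (pow_ne_zero k hp.ne')]
    calc (1/p)^(r+1) * (1/p)^k * (((k + r).choose r : ℝ) * p ^ k * (1 - p) ^ (r + 1))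
        = ((1/p)^k * p^k) * ((1/p)^(r+1) * (1-p)^(r+1) * ((k + r).choose r : ℝ)) := by ring
      _ = (1/p)^(r+1) * (1-p)^(r+1) * ((k + r).choose r : ℝ) := by rw [hppow, one_mul]
  have hb : ∀ k, (1/p)^(r+1+k) * ((auxT p r k)^2 - (auxT p r (k+1))^2)
      ≤ 2 * (auxC p r k * auxT p r k) := by
    intro k
    have hdiff : (auxT p r k)^2 - (auxT p r (k+1))^2
        = auxA p r k * (auxT p r k + auxT p r (k+1)) := by
      rw [hstep k]; ring
    rw [hdiff]
    calc (1/p)^(r+1+k) * (auxA p r k * (auxT p r k + auxT p r (k+1)))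
        = auxC p r k * (auxT p r k + auxT p r (k+1)) := by rw [← hCA k]; ring
      _ ≤ auxC p r k * (2 * auxT p r k) := by
          apply mul_le_mul_of_nonneg_left _ (hc0 k)
          have := hTmono k
          linarith
      _ = 2 * (auxC p r k * auxT p r k) := by ring
  have hLHS0 : ∀ k, 0 ≤ (1/p)^(r+1+k) * ((auxT p r k)^2 - (auxT p r (k+1))^2) := by
    intro k
    apply mul_nonneg (by positivity)
    have h1 := hTmono k
    have h2 := hT0 (k+1)
    nlinarith
  have h2sum : Summable (fun k => 2 * (auxC p r k * auxT p r k)) := hSsum.mul_left 2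
  have hq0 := Real.sqrt_nonneg p
  have hq2 : (Real.sqrt p)^2 = p := Real.sq_sqrt hp.le
  have hq1 : Real.sqrt p < 1 := by nlinarith
  calc ∑' k, (1/p)^(r+1+k) * ((auxT p r k)^2 - (auxT p r (k+1))^2)
      ≤ ∑' k, 2 * (auxC p r k * auxT p r k) :=
        (Summable.of_nonneg_of_le hLHS0 hb h2sum).tsum_le_tsum hb h2sum
    _ = 2 * ∑' k, auxC p r k * auxT p r k := tsum_mul_left
    _ ≤ 2 * ((1/p)^(r+1) * ((1 + Real.sqrt p)^2)^(r+1)) := by linarith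
    _ < 2 * (4/p)^(r+1) := by
        have h4 : (1 + Real.sqrt p)^2 < 4 := by nlinarith
        have hlt : (1/p) * (1 + Real.sqrt p)^2 < 4/p := by
          rw [show (4:ℝ)/p = (1/p) * 4 by ring]
          exact mul_lt_mul_of_pos_left h4 (by positivity)
        have hpow := pow_lt_pow_left₀ hlt (by positivity) (by omega : r+1 ≠ 0)
        rw [← mul_pow]
        exact mul_lt_mul_of_pos_left hpow (by norm_num)
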